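/- Let u : ℝ × ℝ² → ℝ², P : ℝ × ℝ² → ℝ and d : ℝ × ℝ² → ℝ³ be C³ functions satisfying, at every point (t,x₁,x₂) with x₂ ≥ 0: ∂ₜu + (u·∇)u − Δu + ∇P = −∇·(∇d ⊙ ∇d − ½|∇d|²·Id₂), ∇·u = 0, and ∂ₜd + (u·∇)d = Δd + |∇d|²·d. Suppose moreover that for all (t,x₁): u₂(t,x₁,0) = 0, ∂₂u₁(t,x₁,0) = 0, d₃(t,x₁,0) = 0, ∂₂d₁(t,x₁,0) = 0 and ∂₂d₂(t,x₁,0) = 0. Then ∂₂P(t,x₁,0) = 0 for all (t,x₁). -/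

import Mathlib

open scoped BigOperators

noncomputable section

abbrev E2 := EuclideanSpace ℝ (Fin 2)
abbrev E3 := EuclideanSpace ℝ (Fin 3)

/-- Time derivative `∂ₜf` of a scalar function of `(t, x) ∈ ℝ × ℝ²`. -/
noncomputable def dt (f : ℝ × E2 → ℝ) (p : ℝ × E2) : ℝ :=
  fderiv ℝ f p ((1 : ℝ), (0 : E2))

/-- Spatial partial derivative `∂ᵢf` of a scalar function of `(t, x) ∈ ℝ × ℝ²`. -/
noncomputable def ds (i : Fin 2) (f : ℝ × E2 → ℝ) (p : ℝ × E2) : ℝ :=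
  fderiv ℝ f p ((0 : ℝ), EuclideanSpace.single i 1)

/-- Spatial Laplacian `Δf = ∂₁₁f + ∂₂₂f`. -/
noncomputable def lap (f : ℝ × E2 → ℝ) (p : ℝ × E2) : ℝ :=
  ds 0 (fun q => ds 0 f q) p + ds 1 (fun q => ds 1 f q) p

/-- `|∇d|² = Σᵢⱼ (∂ᵢdⱼ)²` (spatial gradient). -/
noncomputable def gradSq (d : ℝ × E2 → E3) (p : ℝ × E2) : ℝ :=
  ∑ i : Fin 2, ∑ k : Fin 3, (ds i (fun q => d q k) p) ^ 2

/-- The momentum equation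
`∂ₜu + (u·∇)u − Δu + ∇P = −∇·(∇d ⊙ ∇d − ½|∇d|² Id₂)` at a point, componentwise. -/
def momentumEq (u : ℝ × E2 → E2) (P : ℝ × E2 → ℝ) (d : ℝ × E2 → E3)
    (p : ℝ × E2) : Prop :=
  ∀ j : Fin 2,
    dt (fun q => u q j) p + (∑ i : Fin 2, u p i * ds i (fun q => u q j) p)
        - lap (fun q => u q j) p + ds j P p
      = - ∑ i : Fin 2, ds i (fun q =>
          (∑ k : Fin 3, ds i (fun q' => d q' k) q * ds j (fun q' => d q' k) q)
            - (if i = j then (1 : ℝ) / 2 else 0) * gradSq d q) p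

/-- Incompressibility `∇·u = 0` at a point. -/
def divFree (u : ℝ × E2 → E2) (p : ℝ × E2) : Prop :=
  ds 0 (fun q => u q 0) p + ds 1 (fun q => u q 1) p = 0

/-- The director equation `∂ₜd + (u·∇)d = Δd + |∇d|² d` at a point, componentwise. -/
def directorEq (u : ℝ × E2 → E2) (d : ℝ × E2 → E3) (p : ℝ × E2) : Prop :=
  ∀ k : Fin 3,
    dt (fun q => d q k) p + (∑ j : Fin 2, u p j * ds j (fun q => d q k) p)
      = lap (fun q => d q k) p + gradSq d p * d p k

/-! ### Auxiliary lemmas -/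

lemma fderiv_dir_zero {f : ℝ × E2 → ℝ} {p : ℝ × E2} (v : ℝ × E2)
    (hf : DifferentiableAt ℝ f p)
    (hv : ∀ h : ℝ, 0 ≤ h → f (p + h • v) = 0) :
    fderiv ℝ f p v = 0 := by
  have h1 : HasDerivAt (fun h : ℝ => p + h • v) v 0 := by
    simpa using ((hasDerivAt_id (0:ℝ)).smul_const v).const_add p
  have hline : HasDerivAt (fun h : ℝ => f (p + h • v)) (fderiv ℝ f p v) 0 := by
    have h0 : HasFDerivAt f (fderiv ℝ f p) (p + (0:ℝ) • v) := by
      simpa using hf.hasFDerivAt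
    have := h0.comp_hasDerivAt 0 h1
    exact this
  have hw : HasDerivWithinAt (fun h : ℝ => f (p + h • v)) (fderiv ℝ f p v) (Set.Ici 0) 0 :=
    hline.hasDerivWithinAt
  have hz : HasDerivWithinAt (fun h : ℝ => f (p + h • v)) 0 (Set.Ici 0) 0 :=
    (hasDerivWithinAt_const (0:ℝ) (Set.Ici (0:ℝ)) (0:ℝ)).congr
      (fun x hx => hv x hx) (hv 0 le_rfl)
  have hu := (uniqueDiffOn_Ici (0:ℝ)) 0 Set.self_mem_Ici
  rw [← hw.derivWithin hu, hz.derivWithin hu]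

lemma contDiff2_ds {f : ℝ × E2 → ℝ} (hf : ContDiff ℝ 3 f) (i : Fin 2) :
    ContDiff ℝ 2 (fun q => ds i f q) :=
  (hf.fderiv_right (by norm_num)).clm_apply contDiff_const

lemma contDiff1_ds {f : ℝ × E2 → ℝ} (hf : ContDiff ℝ 2 f) (i : Fin 2) :
    ContDiff ℝ 1 (fun q => ds i f q) :=
  (hf.fderiv_right (by norm_num)).clm_apply contDiff_const

lemma fderiv_swap_vec {f : ℝ × E2 → ℝ} (hf : ContDiff ℝ 2 f) (p v w : ℝ × E2) :
    fderiv ℝ (fun q => fderiv ℝ f q v) p w = fderiv ℝ (fun q => fderiv ℝ f q w) p v := by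
  have hdf : ContDiff ℝ 1 (fderiv ℝ f) := hf.fderiv_right (by norm_num)
  have h2 : HasFDerivAt (fderiv ℝ f) (fderiv ℝ (fderiv ℝ f) p) p :=
    ((hdf.differentiable (by norm_num)) p).hasFDerivAt
  have hsymm := second_derivative_symmetric
    (fun y => ((hf.differentiable (by norm_num)) y).hasFDerivAt) h2 v w
  have key : ∀ x : ℝ × E2, fderiv ℝ (fun q => fderiv ℝ f q x) p
      = (fderiv ℝ (fderiv ℝ f) p).flip x := by
    intro x
    have := fderiv_clm_apply (c := fderiv ℝ f) (u := fun _ => x)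
      ((hdf.differentiable (by norm_num)) p) (differentiableAt_const x)
    simpa using this
  rw [key v, key w]
  simpa using hsymm.symm

lemma ds_swap {f : ℝ × E2 → ℝ} (hf : ContDiff ℝ 2 f) (i j : Fin 2) (p : ℝ × E2) :
    ds i (fun q => ds j f q) p = ds j (fun q => ds i f q) p := by
  unfold ds
  exact fderiv_swap_vec hf p _ _

lemma ds_congr_fun {f g : ℝ × E2 → ℝ} (h : ∀ q, f q = g q) (i : Fin 2) (p : ℝ × E2) :
    ds i f p = ds i g p := by
  have : f = g := funext h
  rw [this]

lemma ds_add {f g : ℝ × E2 → ℝ} (i : Fin 2) (p : ℝ × E2)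
    (hf : DifferentiableAt ℝ f p) (hg : DifferentiableAt ℝ g p) :
    ds i (fun q => f q + g q) p = ds i f p + ds i g p := by
  unfold ds; rw [fderiv_fun_add hf hg]; simp

lemma ds_sub {f g : ℝ × E2 → ℝ} (i : Fin 2) (p : ℝ × E2)
    (hf : DifferentiableAt ℝ f p) (hg : DifferentiableAt ℝ g p) :
    ds i (fun q => f q - g q) p = ds i f p - ds i g p := by
  unfold ds; rw [fderiv_fun_sub hf hg]; simp

lemma ds_mul {f g : ℝ × E2 → ℝ} (i : Fin 2) (p : ℝ × E2)
    (hf : DifferentiableAt ℝ f p) (hg : DifferentiableAt ℝ g p) :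
    ds i (fun q => f q * g q) p = f p * ds i g p + g p * ds i f p := by
  unfold ds; rw [fderiv_fun_mul hf hg]; simp

lemma ds_const_mul {f : ℝ × E2 → ℝ} (c : ℝ) (i : Fin 2) (p : ℝ × E2)
    (hf : DifferentiableAt ℝ f p) :
    ds i (fun q => c * f q) p = c * ds i f p := by
  unfold ds; rw [fderiv_const_mul hf]; simp

lemma ds_sum {ι : Type*} (s : Finset ι) (F : ι → ℝ × E2 → ℝ) (i : Fin 2) (p : ℝ × E2)
    (hF : ∀ k ∈ s, DifferentiableAt ℝ (F k) p) :
    ds i (fun q => ∑ k ∈ s, F k q) p = ∑ k ∈ s, ds i (F k) p := by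
  unfold ds; rw [fderiv_fun_sum hF]; simp

lemma dt_bd_zero {f : ℝ × E2 → ℝ} {p : ℝ × E2} (hp : p.2 1 = 0)
    (hf : DifferentiableAt ℝ f p) (h0 : ∀ q : ℝ × E2, q.2 1 = 0 → f q = 0) :
    dt f p = 0 := by
  apply fderiv_dir_zero _ hf
  intro h _
  apply h0
  simp [Prod.snd_add, hp]

lemma ds0_bd_zero {f : ℝ × E2 → ℝ} {p : ℝ × E2} (hp : p.2 1 = 0)
    (hf : DifferentiableAt ℝ f p) (h0 : ∀ q : ℝ × E2, q.2 1 = 0 → f q = 0) :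
    ds 0 f p = 0 := by
  apply fderiv_dir_zero _ hf
  intro h _
  apply h0
  simp [Prod.snd_add, EuclideanSpace.single_apply, hp]

lemma ds1_half_zero {f : ℝ × E2 → ℝ} {p : ℝ × E2} (hp : p.2 1 = 0)
    (hf : DifferentiableAt ℝ f p) (h0 : ∀ q : ℝ × E2, 0 ≤ q.2 1 → f q = 0) :
    ds 1 f p = 0 := by
  apply fderiv_dir_zero _ hf
  intro h hh
  apply h0
  simp [Prod.snd_add, EuclideanSpace.single_apply, hp, hh]

/-- If `(u, P, d)` are `C³`, satisfy the full nematic liquid crystal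
system on the closed upper half-plane `{x₂ ≥ 0}`, and satisfy the Navier perfect-slip
and partially free boundary conditions `u₂ = ∂₂u₁ = d₃ = ∂₂d₁ = ∂₂d₂ = 0` on the
boundary `{x₂ = 0}`, then the pressure satisfies the homogeneous Neumann condition
`∂₂P = 0` on `{x₂ = 0}`. -/
theorem pressure_neumann_on_boundary
    (u : ℝ × E2 → E2) (P : ℝ × E2 → ℝ) (d : ℝ × E2 → E3)
    (hu : ContDiff ℝ 3 u) (hP : ContDiff ℝ 3 P) (hd : ContDiff ℝ 3 d)
    (heq : ∀ p : ℝ × E2, 0 ≤ p.2 1 →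
      momentumEq u P d p ∧ divFree u p ∧ directorEq u d p)
    (hbc : ∀ p : ℝ × E2, p.2 1 = 0 →
      u p 1 = 0 ∧ ds 1 (fun q => u q 0) p = 0 ∧ d p 2 = 0 ∧
      ds 1 (fun q => d q 0) p = 0 ∧ ds 1 (fun q => d q 1) p = 0) :
    ∀ p : ℝ × E2, p.2 1 = 0 → ds 1 P p = 0 := by
  intro p hp
  -- differentiability of components
  have hu0 : ContDiff ℝ 3 (fun q => u q 0) :=
    (EuclideanSpace.proj (𝕜 := ℝ) (ι := Fin 2) 0).contDiff.comp hu
  have hu1 : ContDiff ℝ 3 (fun q => u q 1) :=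
    (EuclideanSpace.proj (𝕜 := ℝ) (ι := Fin 2) 1).contDiff.comp hu
  have hdk : ∀ k : Fin 3, ContDiff ℝ 3 (fun q => d q k) := fun k =>
    (EuclideanSpace.proj (𝕜 := ℝ) (ι := Fin 3) k).contDiff.comp hd
  have D3 : ∀ {f : ℝ × E2 → ℝ}, ContDiff ℝ 3 f → ∀ q, DifferentiableAt ℝ f q :=
    fun h q => (h.differentiable (by norm_num)) q
  have D2 : ∀ {f : ℝ × E2 → ℝ}, ContDiff ℝ 2 f → ∀ q, DifferentiableAt ℝ f q :=
    fun h q => (h.differentiable (by norm_num)) q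
  have D1 : ∀ {f : ℝ × E2 → ℝ}, ContDiff ℝ 1 f → ∀ q, DifferentiableAt ℝ f q :=
    fun h q => (h.differentiable (by norm_num)) q
  have hds_u0 : ∀ i : Fin 2, ContDiff ℝ 2 (fun q => ds i (fun q' => u q' 0) q) :=
    fun i => contDiff2_ds hu0 i
  have hds_u1 : ∀ i : Fin 2, ContDiff ℝ 2 (fun q => ds i (fun q' => u q' 1) q) :=
    fun i => contDiff2_ds hu1 i
  have hds_d : ∀ (i : Fin 2) (k : Fin 3),
      ContDiff ℝ 2 (fun q => ds i (fun q' => d q' k) q) :=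
    fun i k => contDiff2_ds (hdk k) i
  -- boundary data
  have Zu1 : ∀ q : ℝ × E2, q.2 1 = 0 → u q 1 = 0 := fun q hq => (hbc q hq).1
  have Zdu0 : ∀ q : ℝ × E2, q.2 1 = 0 → ds 1 (fun q' => u q' 0) q = 0 :=
    fun q hq => (hbc q hq).2.1
  have Zd2 : ∀ q : ℝ × E2, q.2 1 = 0 → d q 2 = 0 := fun q hq => (hbc q hq).2.2.1
  have Zdd0 : ds 1 (fun q => d q 0) p = 0 := (hbc p hp).2.2.2.1
  have Zdd1 : ds 1 (fun q => d q 1) p = 0 := (hbc p hp).2.2.2.2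
  -- tangential derivatives vanish
  have A1 : dt (fun q => u q 1) p = 0 := dt_bd_zero hp (D3 hu1 p) Zu1
  have A2 : ∀ q : ℝ × E2, q.2 1 = 0 → ds 0 (fun q' => u q' 1) q = 0 :=
    fun q hq => ds0_bd_zero hq (D3 hu1 q) Zu1
  have A3 : ds 0 (fun q => ds 0 (fun q' => u q' 1) q) p = 0 :=
    ds0_bd_zero hp (D2 (hds_u1 0) p) A2
  -- ∂₂₂ u₂ = 0 via incompressibility
  have hdivf : ∀ q : ℝ × E2, 0 ≤ q.2 1 →
      ds 0 (fun q' => u q' 0) q + ds 1 (fun q' => u q' 1) q = 0 :=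
    fun q hq => (heq q hq).2.1
  have h4a : ds 1 (fun q => ds 0 (fun q' => u q' 0) q + ds 1 (fun q' => u q' 1) q) p = 0 :=
    ds1_half_zero hp ((D2 (hds_u0 0) p).add (D2 (hds_u1 1) p)) hdivf
  have h4b := ds_add (f := fun q => ds 0 (fun q' => u q' 0) q)
    (g := fun q => ds 1 (fun q' => u q' 1) q) 1 p (D2 (hds_u0 0) p) (D2 (hds_u1 1) p)
  have h4c : ds 1 (fun q => ds 0 (fun q' => u q' 0) q) p = 0 := by
    rw [ds_swap (hu0.of_le (by norm_num)) 1 0 p]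
    exact ds0_bd_zero hp (D2 (hds_u0 1) p) Zdu0
  have A4 : ds 1 (fun q => ds 1 (fun q' => u q' 1) q) p = 0 := by
    rw [h4b, h4c] at h4a; linarith
  have hlapu : lap (fun q => u q 1) p = 0 := by
    unfold lap; rw [A3, A4]; ring
  -- director equation: Δd₃ = 0 on the boundary
  have B1 : dt (fun q => d q 2) p = 0 := dt_bd_zero hp (D3 (hdk 2) p) Zd2
  have B2 : ds 0 (fun q => d q 2) p = 0 := ds0_bd_zero hp (D3 (hdk 2) p) Zd2
  have hdir := (heq p (le_of_eq hp.symm)).2.2 2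
  simp only [Fin.sum_univ_two] at hdir
  rw [B1, B2, Zu1 p hp, Zd2 p hp] at hdir
  have hlap2 : ds 0 (fun q => ds 0 (fun q' => d q' 2) q) p
      + ds 1 (fun q => ds 1 (fun q' => d q' 2) q) p = 0 := by
    have : lap (fun q => d q 2) p = 0 := by linarith
    unfold lap at this; exact this
  -- momentum equation, second component
  have hmom := (heq p (le_of_eq hp.symm)).1 1
  -- compute the two divergence terms of the Ericksen stress
  have e0 : ds 0 (fun q => (∑ k : Fin 3, ds 0 (fun q' => d q' k) q * ds 1 (fun q' => d q' k) q)
        - (if (0 : Fin 2) = (1 : Fin 2) then (1:ℝ)/2 else 0) * gradSq d q) p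
      = ∑ k : Fin 3, (ds 0 (fun q' => d q' k) p * ds 0 (fun q => ds 1 (fun q' => d q' k) q) p
          + ds 1 (fun q' => d q' k) p * ds 0 (fun q => ds 0 (fun q' => d q' k) q) p) := by
    have h1 : ds 0 (fun q => (∑ k : Fin 3, ds 0 (fun q' => d q' k) q * ds 1 (fun q' => d q' k) q)
          - (if (0 : Fin 2) = (1 : Fin 2) then (1:ℝ)/2 else 0) * gradSq d q) p
        = ds 0 (fun q => ∑ k : Fin 3, ds 0 (fun q' => d q' k) q * ds 1 (fun q' => d q' k) q) p :=
      ds_congr_fun (fun q => by norm_num) 0 p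
    have h2 := ds_sum Finset.univ
      (fun k q => ds 0 (fun q' => d q' k) q * ds 1 (fun q' => d q' k) q) 0 p
      (fun k _ => D2 ((hds_d 0 k).mul (hds_d 1 k)) p)
    exact h1.trans (h2.trans (Finset.sum_congr rfl fun k _ =>
      ds_mul 0 p (D2 (hds_d 0 k) p) (D2 (hds_d 1 k) p)))
  have e1 : ds 1 (fun q => (∑ k : Fin 3, ds 1 (fun q' => d q' k) q * ds 1 (fun q' => d q' k) q)
        - (if (1 : Fin 2) = (1 : Fin 2) then (1:ℝ)/2 else 0) * gradSq d q) p
      = (∑ k : Fin 3, (ds 1 (fun q' => d q' k) p * ds 1 (fun q => ds 1 (fun q' => d q' k) q) p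
          + ds 1 (fun q' => d q' k) p * ds 1 (fun q => ds 1 (fun q' => d q' k) q) p))
        - (1/2) * ∑ i : Fin 2, ∑ k : Fin 3,
            (ds i (fun q' => d q' k) p * ds 1 (fun q => ds i (fun q' => d q' k) q) p
              + ds i (fun q' => d q' k) p * ds 1 (fun q => ds i (fun q' => d q' k) q) p) := by
    have h1 : ds 1 (fun q => (∑ k : Fin 3, ds 1 (fun q' => d q' k) q * ds 1 (fun q' => d q' k) q)
          - (if (1 : Fin 2) = (1 : Fin 2) then (1:ℝ)/2 else 0) * gradSq d q) p
        = ds 1 (fun q => (∑ k : Fin 3, ds 1 (fun q' => d q' k) q * ds 1 (fun q' => d q' k) q)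
            - (1/2) * ∑ i : Fin 2, ∑ k : Fin 3,
                ds i (fun q' => d q' k) q * ds i (fun q' => d q' k) q) p :=
      ds_congr_fun (fun q => by simp [gradSq, pow_two]) 1 p
    have hc1 : ContDiff ℝ 2 (fun q => ∑ k : Fin 3,
        ds 1 (fun q' => d q' k) q * ds 1 (fun q' => d q' k) q) :=
      ContDiff.sum fun k _ => (hds_d 1 k).mul (hds_d 1 k)
    have hc2 : ContDiff ℝ 2 (fun q => (1/2 : ℝ) * ∑ i : Fin 2, ∑ k : Fin 3,
        ds i (fun q' => d q' k) q * ds i (fun q' => d q' k) q) :=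
      contDiff_const.mul (ContDiff.sum fun i _ => ContDiff.sum fun k _ =>
        (hds_d i k).mul (hds_d i k))
    have h2 := ds_sub (f := fun q => ∑ k : Fin 3,
        ds 1 (fun q' => d q' k) q * ds 1 (fun q' => d q' k) q)
      (g := fun q => (1/2 : ℝ) * ∑ i : Fin 2, ∑ k : Fin 3,
        ds i (fun q' => d q' k) q * ds i (fun q' => d q' k) q) 1 p (D2 hc1 p) (D2 hc2 p)
    have h3 := ds_sum Finset.univ
      (fun k q => ds 1 (fun q' => d q' k) q * ds 1 (fun q' => d q' k) q) 1 p
      (fun k _ => D2 ((hds_d 1 k).mul (hds_d 1 k)) p)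
    have h4 := ds_const_mul (f := fun q => ∑ i : Fin 2, ∑ k : Fin 3,
        ds i (fun q' => d q' k) q * ds i (fun q' => d q' k) q) (1/2 : ℝ) 1 p
      (D2 (ContDiff.sum fun i _ => ContDiff.sum fun k _ => (hds_d i k).mul (hds_d i k)) p)
    have h5 := ds_sum Finset.univ (fun (i : Fin 2) q => ∑ k : Fin 3,
        ds i (fun q' => d q' k) q * ds i (fun q' => d q' k) q) 1 p
      (fun i _ => D2 (ContDiff.sum fun k _ => (hds_d i k).mul (hds_d i k)) p)
    have h6 : ∀ i : Fin 2, ds 1 (fun q => ∑ k : Fin 3,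
        ds i (fun q' => d q' k) q * ds i (fun q' => d q' k) q) p
        = ∑ k : Fin 3, (ds i (fun q' => d q' k) p * ds 1 (fun q => ds i (fun q' => d q' k) q) p
            + ds i (fun q' => d q' k) p * ds 1 (fun q => ds i (fun q' => d q' k) q) p) := by
      intro i
      have := ds_sum Finset.univ
        (fun k q => ds i (fun q' => d q' k) q * ds i (fun q' => d q' k) q) 1 p
        (fun k _ => D2 ((hds_d i k).mul (hds_d i k)) p)
      exact this.trans (Finset.sum_congr rfl fun k _ =>
        ds_mul 1 p (D2 (hds_d i k) p) (D2 (hds_d i k) p))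
    calc ds 1 _ p = _ := h1
    _ = _ := h2
    _ = _ := by
      rw [h4]
      congr 1
      · exact h3.trans (Finset.sum_congr rfl fun k _ =>
          ds_mul 1 p (D2 (hds_d 1 k) p) (D2 (hds_d 1 k) p))
      · rw [h5]
        exact congrArg _ (Finset.sum_congr rfl fun i _ => h6 i)
  have eR : (∑ i : Fin 2, ds i (fun q =>
        (∑ k : Fin 3, ds i (fun q' => d q' k) q * ds 1 (fun q' => d q' k) q)
          - (if i = 1 then (1:ℝ)/2 else 0) * gradSq d q) p)
      = (∑ k : Fin 3, (ds 0 (fun q' => d q' k) p * ds 0 (fun q => ds 1 (fun q' => d q' k) q) p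
          + ds 1 (fun q' => d q' k) p * ds 0 (fun q => ds 0 (fun q' => d q' k) q) p))
        + ((∑ k : Fin 3, (ds 1 (fun q' => d q' k) p * ds 1 (fun q => ds 1 (fun q' => d q' k) q) p
            + ds 1 (fun q' => d q' k) p * ds 1 (fun q => ds 1 (fun q' => d q' k) q) p))
          - (1/2) * ∑ i : Fin 2, ∑ k : Fin 3,
              (ds i (fun q' => d q' k) p * ds 1 (fun q => ds i (fun q' => d q' k) q) p
                + ds i (fun q' => d q' k) p * ds 1 (fun q => ds i (fun q' => d q' k) q) p)) := by
    rw [Fin.sum_univ_two, e0, e1]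
  rw [eR] at hmom
  simp only [Fin.sum_univ_two, Fin.sum_univ_three] at hmom
  -- symmetry of second derivatives
  have sw : ∀ k : Fin 3, ds 0 (fun q => ds 1 (fun q' => d q' k) q) p
      = ds 1 (fun q => ds 0 (fun q' => d q' k) q) p :=
    fun k => ds_swap ((hdk k).of_le (by norm_num)) 0 1 p
  rw [A1, A2 p hp, Zu1 p hp, hlapu, Zdd0, Zdd1, sw 0, sw 1, sw 2] at hmom
  linear_combination hmom - (ds 1 (fun q' => d q' 2) p) * hlap2


end
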